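/- Let m ≥ 1 and let Γ = ⟨2, 2m+1⟩ = {0, 2, 4, ..., 2m} ∪ {n : n ≥ 2m+1} be the numerical semigroup generated by 2 and 2m+1, with g(n) = #{k < n : k ∉ Γ}. Then L_Γ(q,t) := ∑_{n ∈ Γ, n−1 ∉ Γ} q^{g(n)} t^n − ∑_{n ∉ Γ, n−1 ∈ Γ} q^{g(n−1)} t^n = ∑_{j=0}^{m} q^j t^{2j} − t·∑_{j=0}^{m−1} q^j t^{2j}. -/

import Mathlib

/-- The numerical semigroup `Γ = ⟨2, 2m+1⟩ = {0,2,4,…,2m} ∪ {n : n ≥ 2m+1}`. -/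
def Gam11 (m : ℕ) : ℕ → Prop := fun n => Even n ∨ 2 * m + 1 ≤ n

instance (m : ℕ) : DecidablePred (Gam11 m) := fun n => by
  unfold Gam11; infer_instance

lemma gap_card (m j : ℕ) (hj : j ≤ m) :
    ((Finset.range (2 * j)).filter (fun k => ¬ Gam11 m k)).card = j := by
  induction j with
  | zero => simp
  | succ i ih =>
    have h2 : 2 * (i + 1) = (2 * i + 1) + 1 := by ring
    rw [h2, Finset.range_add_one, Finset.filter_insert, Finset.range_add_one,
      Finset.filter_insert]
    have hodd : ¬ Gam11 m (2 * i + 1) := by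
      simp only [Gam11, Nat.even_iff, not_or, not_le]
      omega
    have heven : Gam11 m (2 * i) := Or.inl (even_two_mul i)
    rw [if_pos hodd, if_neg (by simpa using heven)]
    rw [Finset.card_insert_of_notMem (by simp)]
    rw [ih (by omega)]

theorem stmt11 {K : Type*} [CommRing K] (m : ℕ) (hm : 1 ≤ m) (q t : K)
    (N : ℕ) (hN : 2 * m + 2 ≤ N) :
    (∑ n ∈ (Finset.range N).filter (fun n => Gam11 m n ∧ (n = 0 ∨ ¬ Gam11 m (n - 1))),
        q ^ ((Finset.range n).filter (fun k => ¬ Gam11 m k)).card * t ^ n) -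
      (∑ n ∈ (Finset.range N).filter (fun n => ¬ Gam11 m n ∧ Gam11 m (n - 1)),
        q ^ ((Finset.range (n - 1)).filter (fun k => ¬ Gam11 m k)).card * t ^ n) =
      (∑ j ∈ Finset.range (m + 1), q ^ j * t ^ (2 * j)) -
        t * ∑ j ∈ Finset.range m, q ^ j * t ^ (2 * j) := by
  have hset1 : (Finset.range N).filter (fun n => Gam11 m n ∧ (n = 0 ∨ ¬ Gam11 m (n - 1)))
      = (Finset.range (m + 1)).image (fun j => 2 * j) := by
    ext n
    simp only [Finset.mem_filter, Finset.mem_range, Finset.mem_image, Gam11,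
      Nat.even_iff, not_or, not_le]
    constructor
    · rintro ⟨hn, h⟩
      exact ⟨n / 2, by omega, by omega⟩
    · rintro ⟨j, hj, rfl⟩
      omega
  have hset2 : (Finset.range N).filter (fun n => ¬ Gam11 m n ∧ Gam11 m (n - 1))
      = (Finset.range m).image (fun j => 2 * j + 1) := by
    ext n
    simp only [Finset.mem_filter, Finset.mem_range, Finset.mem_image, Gam11,
      Nat.even_iff, not_or, not_le]
    constructor
    · rintro ⟨hn, h⟩
      exact ⟨n / 2, by omega, by omega⟩
    · rintro ⟨j, hj, rfl⟩
      omega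
  rw [hset1, hset2,
    Finset.sum_image (by intro a _ b _ h; simp only at h; omega),
    Finset.sum_image (by intro a _ b _ h; simp only at h; omega)]
  have e1 : ∀ j ∈ Finset.range (m + 1),
      q ^ ((Finset.range (2 * j)).filter (fun k => ¬ Gam11 m k)).card * t ^ (2 * j)
      = q ^ j * t ^ (2 * j) := by
    intro j hj
    rw [gap_card m j (by simpa using Nat.lt_succ_iff.mp (Finset.mem_range.mp hj))]
  have e2 : ∀ j ∈ Finset.range m,
      q ^ ((Finset.range (2 * j + 1 - 1)).filter (fun k => ¬ Gam11 m k)).card * t ^ (2 * j + 1)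
      = t * (q ^ j * t ^ (2 * j)) := by
    intro j hj
    have := Finset.mem_range.mp hj
    rw [Nat.add_sub_cancel, gap_card m j (by omega), pow_succ]
    ring
  rw [Finset.sum_congr rfl e1, Finset.sum_congr rfl e2, ← Finset.mul_sum]
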